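/- arXiv:1110.5846 — 2 statements merged into one kernel-verified Lean document; each statement's English description precedes it below -/
import Mathlib

section
/- For all real numbers ε₁, ε₂ with ε₂ > 0 and ε₁ + ε₂ < −1, and all real ξ₁, ξ₂, set u₁ = ξ₁ + iε₁ and u₂ = ξ₂ + iε₂. Then the function (x₁,x₂) ↦ e^{−i(u₁x₁+u₂x₂)} · max(e^{x₁} − e^{x₂} − 1, 0) is Lebesgue integrable on ℝ², and ∬_{ℝ²} e^{−i(u₁x₁+u₂x₂)} max(e^{x₁} − e^{x₂} − 1, 0) dx₁ dx₂ = Γ(i(u₁+u₂) − 1) Γ(−iu₂) / Γ(iu₁ + 1). -/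
open MeasureTheory Set Filter

lemma tendsto_cexp_mul_zero {z : ℂ} (hz : z.re < 0) :
    Tendsto (fun x : ℝ => Complex.exp (z * x)) atTop (nhds 0) := by
  rw [tendsto_zero_iff_norm_tendsto_zero]
  have h1 : Tendsto (fun x : ℝ => z.re * x) atTop atBot :=
    (tendsto_const_mul_atBot_of_neg hz).mpr tendsto_id
  have h2 := Real.tendsto_exp_atBot.comp h1
  refine h2.congr fun x => ?_
  simp [Function.comp, Complex.norm_exp, Complex.mul_re]

lemma hasDerivAt_cexp_real (z : ℂ) (x : ℝ) :
    HasDerivAt (fun y : ℝ => Complex.exp (z * y)) (z * Complex.exp (z * x)) x := by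
  have h := ((Complex.hasDerivAt_exp (z * x)).comp (x : ℂ)
    ((hasDerivAt_id (x : ℂ)).const_mul z)).comp_ofReal
  simpa [mul_comm] using h

lemma integrableOn_cexp_Ioi {z : ℂ} (hz : z.re < 0) (a : ℝ) :
    IntegrableOn (fun x : ℝ => Complex.exp (z * x)) (Ioi a) := by
  have h : IntegrableOn (fun x : ℝ => Real.exp (z.re * x)) (Ioi a) := by
    simpa using exp_neg_integrableOn_Ioi a (neg_pos.mpr hz)
  refine h.integrable.mono' ?_ (ae_of_all _ fun x => ?_)
  · exact (Complex.continuous_exp.comp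
      (continuous_const.mul Complex.continuous_ofReal)).aestronglyMeasurable
  · simp [Complex.norm_exp, Complex.mul_re]

lemma specA {s : ℂ} (hs : s.re < -1) {c : ℝ} (hc : 0 < c) :
    Integrable (fun x : ℝ => Complex.exp (s * x) * ((max (Real.exp x - c) 0 : ℝ) : ℂ)) ∧
      ∫ x : ℝ, Complex.exp (s * x) * ((max (Real.exp x - c) 0 : ℝ) : ℂ) =
        Complex.exp ((s + 1) * Real.log c) / (s * (s + 1)) := by
  have hre : s.re < 0 := by linarith
  have hre1 : (s + 1).re < 0 := by simp [Complex.add_re]; linarith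
  have hs0 : s ≠ 0 := fun h => by rw [h] at hre; simp at hre
  have hs1 : s + 1 ≠ 0 := fun h => by rw [h] at hre1; simp at hre1
  set a := Real.log c with ha
  set f : ℝ → ℂ := fun x => Complex.exp (s * x) * ((max (Real.exp x - c) 0 : ℝ) : ℂ) with hfdef
  set g : ℝ → ℂ := fun x => Complex.exp ((s + 1) * x) - c * Complex.exp (s * x) with hgdef
  have hfg : EqOn f g (Ioi a) := by
    intro x hx
    have hcx : c < Real.exp x := by
      rw [← Real.exp_log hc]; exact Real.exp_lt_exp.mpr hx
    have hmax : max (Real.exp x - c) 0 = Real.exp x - c := max_eq_left (by linarith)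
    simp only [hfdef, hgdef, hmax]
    push_cast
    rw [mul_sub, ← Complex.exp_add, show s * (x:ℂ) + (x:ℂ) = (s+1) * (x:ℂ) by ring,
      mul_comm (Complex.exp (s * (x:ℂ))) (c:ℂ)]
  have hint_g : IntegrableOn g (Ioi a) :=
    (integrableOn_cexp_Ioi hre1 a).sub ((integrableOn_cexp_Ioi hre a).const_mul (c : ℂ))
  set F : ℝ → ℂ := fun x => Complex.exp ((s + 1) * x) / (s + 1) - c * Complex.exp (s * x) / s
    with hFdef
  have hderiv : ∀ x ∈ Ici a, HasDerivAt F (g x) x := by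
    intro x _
    have h1 := (hasDerivAt_cexp_real (s + 1) x).div_const (s + 1)
    have h2 := ((hasDerivAt_cexp_real s x).const_mul (c : ℂ)).div_const s
    have := h1.sub h2
    refine this.congr_deriv ?_
    simp only [hgdef]
    field_simp
  have htend : Tendsto F atTop (nhds 0) := by
    have := ((tendsto_cexp_mul_zero hre1).div_const (s + 1)).sub
      (((tendsto_cexp_mul_zero hre).const_mul (c : ℂ)).div_const s)
    simpa using this
  have key := integral_Ioi_of_hasDerivAt_of_tendsto' hderiv hint_g htend
  have hFa : F a = - (Complex.exp ((s + 1) * Real.log c) / (s * (s + 1))) := by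
    have hca : (c : ℂ) = Complex.exp (a : ℂ) := by
      rw [← Complex.ofReal_exp, ha, Real.exp_log hc]
    simp only [hFdef]
    rw [hca, ← Complex.exp_add]
    rw [show (a : ℂ) + s * a = (s + 1) * a by ring]
    rw [show ((Real.log c : ℝ) : ℂ) = (a : ℂ) by rw [ha]]
    field_simp
    ring
  have hzero : ∀ x, x ∉ Ioi a → f x = 0 := by
    intro x hx
    have hxa : x ≤ a := not_lt.mp hx
    have : Real.exp x ≤ c := by
      rw [← Real.exp_log hc]; exact Real.exp_le_exp.mpr hxa
    have hmax : max (Real.exp x - c) 0 = 0 := max_eq_right (by linarith)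
    simp [hfdef, hmax]
  have hind : f = (Ioi a).indicator f := by
    funext x
    by_cases hx : x ∈ Ioi a
    · rw [indicator_of_mem hx]
    · rw [indicator_of_notMem hx, hzero x hx]
  have hfint : IntegrableOn f (Ioi a) := hint_g.congr_fun (fun x hx => (hfg hx).symm)
    measurableSet_Ioi
  constructor
  · rw [hind]
    exact (integrable_indicator_iff measurableSet_Ioi).mpr hfint
  · calc ∫ x : ℝ, f x = ∫ x in Ioi a, f x := by
          conv_lhs => rw [hind]
          exact integral_indicator measurableSet_Ioi
    _ = ∫ x in Ioi a, g x := setIntegral_congr_fun measurableSet_Ioi hfg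
    _ = 0 - F a := key
    _ = Complex.exp ((s + 1) * Real.log c) / (s * (s + 1)) := by rw [hFa]; ring

lemma specA_real {σ : ℝ} (hσ : σ < -1) {c : ℝ} (hc : 0 < c) :
    Integrable (fun x : ℝ => Real.exp (σ * x) * max (Real.exp x - c) 0) ∧
      ∫ x : ℝ, Real.exp (σ * x) * max (Real.exp x - c) 0 =
        Real.exp ((σ + 1) * Real.log c) / (σ * (σ + 1)) := by
  obtain ⟨hi, he⟩ := specA (s := (σ : ℂ)) (by simpa using hσ) hc
  have hcongr : ∀ x : ℝ,
      Complex.exp ((σ : ℂ) * x) * ((max (Real.exp x - c) 0 : ℝ) : ℂ) =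
        ((Real.exp (σ * x) * max (Real.exp x - c) 0 : ℝ) : ℂ) := by
    intro x
    push_cast
    ring
  constructor
  · refine hi.norm.congr (ae_of_all _ fun x => ?_)
    simp only [hcongr, Complex.norm_real]
    exact abs_of_nonneg (by positivity)
  · have h2 := he
    simp_rw [hcongr] at h2
    norm_cast at h2

lemma specB {w z : ℂ} (hw : 0 < w.re) (hwz : (w + z).re < 0) :
    Integrable (fun x : ℝ => Complex.exp (w * x + z * Real.log (1 + Real.exp x))) ∧
      ∫ x : ℝ, Complex.exp (w * x + z * Real.log (1 + Real.exp x)) =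
        Complex.Gamma w * Complex.Gamma (-z - w) / Complex.Gamma (-z) := by
  set v : ℂ := -z - w with hvdef
  have hv : 0 < v.re := by
    simp only [hvdef, Complex.sub_re, Complex.neg_re]
    simp only [Complex.add_re] at hwz
    linarith
  have hA : ∀ t : ℝ, 0 < 1 + Real.exp t := fun t => by positivity
  set σ : ℝ → ℝ := fun t => Real.exp t / (1 + Real.exp t) with hσdef
  set σ' : ℝ → ℝ := fun t => Real.exp t / (1 + Real.exp t) ^ 2 with hσ'def
  have hσpos : ∀ t, 0 < σ t := fun t => div_pos (Real.exp_pos t) (hA t)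
  have hσlt : ∀ t, σ t < 1 := fun t => by
    rw [hσdef]
    simp only
    rw [div_lt_one (hA t)]
    linarith [Real.exp_pos t]
  have hderiv : ∀ t ∈ (univ : Set ℝ), HasDerivWithinAt σ (σ' t) univ t := by
    intro t _
    have h := (Real.hasDerivAt_exp t).div
      ((hasDerivAt_const t (1 : ℝ)).add (Real.hasDerivAt_exp t)) (hA t).ne'
    have h2 : HasDerivAt σ (σ' t) t := by
      refine h.congr_deriv ?_
      rw [hσ'def]
      simp only [Pi.add_apply]
      field_simp
      ring
    exact h2.hasDerivWithinAt
  have hinj : InjOn σ univ := by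
    intro t1 _ t2 _ h
    rw [hσdef] at h
    simp only at h
    rw [div_eq_div_iff (hA t1).ne' (hA t2).ne'] at h
    have : Real.exp t1 = Real.exp t2 := by nlinarith [h]
    exact Real.exp_injective this
  have himg : σ '' univ = Ioo 0 1 := by
    rw [image_univ]
    ext y
    constructor
    · rintro ⟨t, rfl⟩
      exact ⟨hσpos t, hσlt t⟩
    · rintro ⟨h0, h1⟩
      have h1y : 0 < 1 - y := by linarith
      refine ⟨Real.log (y / (1 - y)), ?_⟩
      have hyy : Real.exp (Real.log (y / (1 - y))) = y / (1 - y) :=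
        Real.exp_log (div_pos h0 h1y)
      rw [hσdef]
      simp only [hyy]
      rw [show 1 + y / (1 - y) = 1 / (1 - y) by field_simp; ring]
      rw [div_div_div_cancel_right₀]
      · simp
      · exact h1y.ne'
  set g : ℝ → ℂ := fun x : ℝ => (x : ℂ) ^ (w - 1) * (1 - (x : ℂ)) ^ (v - 1) with hgdef
  have hkey : ∀ t : ℝ, |σ' t| • g (σ t) = Complex.exp (w * t + z * Real.log (1 + Real.exp t)) := by
    intro t
    set L := Real.log (1 + Real.exp t) with hL
    have hLog : Real.log (σ t) = t - L := by
      rw [hσdef]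
      simp only
      rw [Real.log_div (Real.exp_pos t).ne' (hA t).ne', Real.log_exp]
    have h1σ : (0:ℝ) < 1 - σ t := by linarith [hσlt t]
    have hLog2 : Real.log (1 - σ t) = -L := by
      rw [show 1 - σ t = 1 / (1 + Real.exp t) by rw [hσdef]; field_simp; ring]
      rw [one_div, Real.log_inv]
    have e1 : ((σ t : ℝ) : ℂ) ^ (w - 1) = Complex.exp ((w - 1) * ((t : ℂ) - (L : ℂ))) := by
      rw [Complex.cpow_def_of_ne_zero (by exact_mod_cast (hσpos t).ne')]
      rw [← Complex.ofReal_log (hσpos t).le, hLog]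
      push_cast
      ring_nf
    have e2 : (1 - ((σ t : ℝ) : ℂ)) ^ (v - 1) = Complex.exp ((v - 1) * (-(L : ℂ))) := by
      rw [show (1 : ℂ) - ((σ t : ℝ) : ℂ) = ((1 - σ t : ℝ) : ℂ) by push_cast; ring]
      rw [Complex.cpow_def_of_ne_zero (by exact_mod_cast h1σ.ne')]
      rw [← Complex.ofReal_log h1σ.le, hLog2]
      push_cast
      ring_nf
    have e3 : |σ' t| = Real.exp (t - 2 * L) := by
      have hrfl : σ' t = Real.exp t / (1 + Real.exp t) ^ 2 := rfl
      rw [hrfl, abs_of_pos (div_pos (Real.exp_pos t) (pow_pos (hA t) 2)), Real.exp_sub]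
      congr 1
      rw [show (2:ℝ) * L = L + L by ring, Real.exp_add, Real.exp_log (hA t), sq]
    rw [hgdef]
    simp only
    rw [e1, e2, e3, Complex.real_smul, Complex.ofReal_exp]
    rw [← Complex.exp_add, ← Complex.exp_add]
    push_cast
    rw [hvdef]
    congr 1
    ring
  have hbeta : IntegrableOn g (Ioo (0:ℝ) 1) := by
    have h := (Complex.betaIntegral_convergent hw hv).1
    exact h.mono_set Ioo_subset_Ioc_self
  constructor
  · have h := (integrableOn_image_iff_integrableOn_abs_deriv_smul MeasurableSet.univ
      hderiv hinj g).mp (by rwa [himg])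
    rw [integrableOn_univ] at h
    exact h.congr (ae_of_all _ hkey)
  · have himage := integral_image_eq_integral_abs_deriv_smul MeasurableSet.univ hderiv hinj g
    rw [himg, setIntegral_univ] at himage
    have hbeta_eq : ∫ x in Ioo (0:ℝ) 1, g x = Complex.betaIntegral w v := by
      rw [Complex.betaIntegral, intervalIntegral.integral_of_le zero_le_one,
        integral_Ioc_eq_integral_Ioo]
    have hGamma := Complex.Gamma_mul_Gamma_eq_betaIntegral hw hv
    have hnz : Complex.Gamma (w + v) ≠ 0 :=
      Complex.Gamma_ne_zero_of_re_pos (by rw [Complex.add_re]; linarith)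
    have hbval : Complex.betaIntegral w v =
        Complex.Gamma w * Complex.Gamma v / Complex.Gamma (w + v) := by
      rw [hGamma]
      field_simp
    have hwv : w + v = -z := by rw [hvdef]; ring
    calc ∫ x : ℝ, Complex.exp (w * x + z * Real.log (1 + Real.exp x))
        = ∫ t : ℝ, |σ' t| • g (σ t) := by
          refine integral_congr_ae (ae_of_all _ fun t => ?_)
          exact (hkey t).symm
      _ = ∫ x in Ioo (0:ℝ) 1, g x := himage.symm
      _ = Complex.betaIntegral w v := hbeta_eq
      _ = Complex.Gamma w * Complex.Gamma v / Complex.Gamma (w + v) := hbval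
      _ = Complex.Gamma w * Complex.Gamma (-z - w) / Complex.Gamma (-z) := by
          rw [hwv, hvdef]

/-- **Fourier transform of the spread option payoff.**
For ε₂ > 0 and ε₁ + ε₂ < −1, with u₁ = ξ₁ + iε₁, u₂ = ξ₂ + iε₂, the function
(x₁,x₂) ↦ e^{−i(u₁x₁+u₂x₂)} max(e^{x₁} − e^{x₂} − 1, 0) is integrable on ℝ² and its
integral equals Γ(i(u₁+u₂) − 1) Γ(−iu₂) / Γ(iu₁ + 1). -/
theorem stmt_0 (ε₁ ε₂ : ℝ) (hε₂ : 0 < ε₂) (hε : ε₁ + ε₂ < -1) (ξ₁ ξ₂ : ℝ) :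
    Integrable (fun x : ℝ × ℝ =>
      Complex.exp (-Complex.I * (((ξ₁ : ℂ) + Complex.I * (ε₁ : ℂ)) * (x.1 : ℂ) +
          ((ξ₂ : ℂ) + Complex.I * (ε₂ : ℂ)) * (x.2 : ℂ))) *
        ((max (Real.exp x.1 - Real.exp x.2 - 1) 0 : ℝ) : ℂ)) ∧
    (∫ x : ℝ × ℝ,
      Complex.exp (-Complex.I * (((ξ₁ : ℂ) + Complex.I * (ε₁ : ℂ)) * (x.1 : ℂ) +
          ((ξ₂ : ℂ) + Complex.I * (ε₂ : ℂ)) * (x.2 : ℂ))) *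
        ((max (Real.exp x.1 - Real.exp x.2 - 1) 0 : ℝ) : ℂ)) =
      Complex.Gamma (Complex.I * (((ξ₁ : ℂ) + Complex.I * (ε₁ : ℂ)) +
          ((ξ₂ : ℂ) + Complex.I * (ε₂ : ℂ))) - 1) *
        Complex.Gamma (-Complex.I * ((ξ₂ : ℂ) + Complex.I * (ε₂ : ℂ))) /
        Complex.Gamma (Complex.I * ((ξ₁ : ℂ) + Complex.I * (ε₁ : ℂ)) + 1) := by
  have hε₁ : ε₁ < -1 := by linarith
  set u₁ : ℂ := (ξ₁ : ℂ) + Complex.I * (ε₁ : ℂ) with hu₁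
  set u₂ : ℂ := (ξ₂ : ℂ) + Complex.I * (ε₂ : ℂ) with hu₂
  set s : ℂ := -Complex.I * u₁ with hsdef
  set w : ℂ := -Complex.I * u₂ with hwdef
  have hs_re : s.re = ε₁ := by
    simp [hsdef, hu₁, Complex.mul_re, Complex.add_re, Complex.add_im]
  have hw_re : w.re = ε₂ := by
    simp [hwdef, hu₂, Complex.mul_re, Complex.add_re, Complex.add_im]
  have hsre : s.re < -1 := by rw [hs_re]; exact hε₁
  set F : ℝ × ℝ → ℂ := fun x =>
    Complex.exp (-Complex.I * (u₁ * (x.1 : ℂ) + u₂ * (x.2 : ℂ))) *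
      ((max (Real.exp x.1 - Real.exp x.2 - 1) 0 : ℝ) : ℂ) with hFdef
  have hF : ∀ x : ℝ × ℝ, F x =
      Complex.exp (w * x.2) * (Complex.exp (s * x.1) *
        ((max (Real.exp x.1 - (1 + Real.exp x.2)) 0 : ℝ) : ℂ)) := by
    intro x
    rw [hFdef]
    simp only
    rw [show -Complex.I * (u₁ * (x.1 : ℂ) + u₂ * (x.2 : ℂ)) = s * x.1 + w * x.2 by
      rw [hsdef, hwdef]; ring]
    rw [Complex.exp_add]
    rw [show Real.exp x.1 - Real.exp x.2 - 1 = Real.exp x.1 - (1 + Real.exp x.2) by ring]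
    ring
  have hcont : Continuous F := by
    rw [hFdef]
    apply Continuous.mul
    · exact Complex.continuous_exp.comp (by fun_prop)
    · apply Complex.continuous_ofReal.comp
      exact (((Real.continuous_exp.comp continuous_fst).sub
        (Real.continuous_exp.comp continuous_snd)).sub continuous_const).max continuous_const
  have h1 : ∀ x₂ : ℝ, Integrable (fun x₁ => F (x₁, x₂)) := by
    intro x₂
    have hc : (0 : ℝ) < 1 + Real.exp x₂ := by positivity
    have h := (specA hsre hc).1.const_mul (Complex.exp (w * x₂))
    refine h.congr (ae_of_all _ fun x₁ => ?_)
    exact (hF (x₁, x₂)).symm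
  have hnormF : ∀ x : ℝ × ℝ, ‖F x‖ =
      Real.exp (ε₂ * x.2) * (Real.exp (ε₁ * x.1) *
        max (Real.exp x.1 - (1 + Real.exp x.2)) 0) := by
    intro x
    have hr1 : (w * (x.2 : ℂ)).re = ε₂ * x.2 := by simp [Complex.mul_re, hw_re]
    have hr2 : (s * (x.1 : ℂ)).re = ε₁ * x.1 := by simp [Complex.mul_re, hs_re]
    rw [hF x, norm_mul, norm_mul, Complex.norm_exp,
      Complex.norm_exp, hr1, hr2, Complex.norm_real,
      Real.norm_eq_abs, abs_of_nonneg (le_max_right _ _)]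
  have hnorm_int : ∀ x₂ : ℝ, ∫ x₁, ‖F (x₁, x₂)‖ =
      Real.exp (ε₂ * x₂) *
        (Real.exp ((ε₁ + 1) * Real.log (1 + Real.exp x₂)) / (ε₁ * (ε₁ + 1))) := by
    intro x₂
    have hc : (0 : ℝ) < 1 + Real.exp x₂ := by positivity
    simp_rw [hnormF]
    rw [integral_const_mul, (specA_real hε₁ hc).2]
  have hnormint : Integrable (fun x₂ : ℝ => ∫ x₁, ‖F (x₁, x₂)‖) := by
    have hw' : (0 : ℝ) < ((ε₂ : ℂ)).re := by simpa using hε₂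
    have hwz' : (((ε₂ : ℂ)) + ((ε₁ + 1 : ℝ) : ℂ)).re < 0 := by
      simp only [Complex.add_re, Complex.ofReal_re]
      linarith
    have h := (specB hw' hwz').1.norm
    have hreal : Integrable
        (fun x : ℝ => Real.exp (ε₂ * x + (ε₁ + 1) * Real.log (1 + Real.exp x))) := by
      refine h.congr (ae_of_all _ fun x => ?_)
      simp only [Complex.norm_exp]
      congr 1
      simp [Complex.add_re, Complex.mul_re]
    refine (hreal.mul_const ((ε₁ * (ε₁ + 1))⁻¹)).congr (ae_of_all _ fun x₂ => ?_)
    simp only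
    rw [hnorm_int x₂, Real.exp_add, div_eq_mul_inv]
    ring
  have hmeas : AEStronglyMeasurable F ((volume : Measure ℝ).prod volume) := by
    rw [← Measure.volume_eq_prod]
    exact hcont.aestronglyMeasurable
  have hint2 : Integrable F ((volume : Measure ℝ).prod volume) :=
    (integrable_prod_iff' hmeas).mpr ⟨ae_of_all _ h1, hnormint⟩
  have hintF : Integrable F := by rw [Measure.volume_eq_prod]; exact hint2
  refine ⟨hintF, ?_⟩
  rw [show (volume : Measure (ℝ × ℝ)) = (volume : Measure ℝ).prod volume from Measure.volume_eq_prod ℝ ℝ]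
  rw [integral_prod_symm F hint2]
  have hin : ∀ x₂ : ℝ, (∫ x₁ : ℝ, F (x₁, x₂)) =
      Complex.exp (w * x₂ + (s + 1) * Real.log (1 + Real.exp x₂)) * (s * (s + 1))⁻¹ := by
    intro x₂
    have hc : (0 : ℝ) < 1 + Real.exp x₂ := by positivity
    calc (∫ x₁ : ℝ, F (x₁, x₂))
        = ∫ x₁ : ℝ, Complex.exp (w * x₂) * (Complex.exp (s * x₁) *
            ((max (Real.exp x₁ - (1 + Real.exp x₂)) 0 : ℝ) : ℂ)) :=
          integral_congr_ae (ae_of_all _ fun x₁ => hF (x₁, x₂))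
      _ = Complex.exp (w * x₂) * ∫ x₁ : ℝ, Complex.exp (s * x₁) *
            ((max (Real.exp x₁ - (1 + Real.exp x₂)) 0 : ℝ) : ℂ) := integral_const_mul _ _
      _ = Complex.exp (w * x₂) *
            (Complex.exp ((s + 1) * Real.log (1 + Real.exp x₂)) / (s * (s + 1))) := by
          rw [(specA hsre hc).2]
      _ = Complex.exp (w * x₂ + (s + 1) * Real.log (1 + Real.exp x₂)) * (s * (s + 1))⁻¹ := by
          rw [Complex.exp_add, div_eq_mul_inv]; ring
  simp_rw [hin]
  rw [integral_mul_const]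
  have hw2 : 0 < w.re := by rw [hw_re]; exact hε₂
  have hwz2 : (w + (s + 1)).re < 0 := by
    simp only [Complex.add_re, Complex.one_re, hs_re, hw_re]
    linarith
  rw [(specB hw2 hwz2).2]
  -- algebra
  have hs0 : s ≠ 0 := by
    intro h; rw [h, Complex.zero_re] at hs_re; linarith
  have hs1 : s + 1 ≠ 0 := by
    intro h
    have := congrArg Complex.re h
    rw [Complex.add_re, Complex.one_re, Complex.zero_re, hs_re] at this
    linarith
  have hs2 : -s - 1 ≠ 0 := by
    intro h
    have := congrArg Complex.re h
    rw [Complex.sub_re, Complex.neg_re, Complex.one_re, Complex.zero_re, hs_re] at this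
    linarith
  have hGnz : Complex.Gamma (-(s + 1)) ≠ 0 :=
    Complex.Gamma_ne_zero_of_re_pos
      (by rw [Complex.neg_re, Complex.add_re, Complex.one_re, hs_re]; linarith)
  rw [show Complex.I * (u₁ + u₂) - 1 = -(s + 1) - w by rw [hsdef, hwdef]; ring]
  rw [show Complex.I * u₁ + 1 = -s + 1 by rw [hsdef]; ring]
  have hG1 : Complex.Gamma (-s + 1) = (-s) * ((-s - 1) * Complex.Gamma (-s - 1)) := by
    rw [Complex.Gamma_add_one _ (neg_ne_zero.mpr hs0)]
    congr 1
    conv_lhs => rw [show -s = (-s - 1) + 1 by ring]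
    rw [Complex.Gamma_add_one _ hs2]
  rw [hG1]
  rw [show -s - 1 = -(s + 1) by ring]
  field_simp
end

section
/- For all real a > 0 and u ≥ 0, the function z ↦ (1 − e^{−uz}) e^{−z/a} / z is Lebesgue integrable on (0, ∞) and ∫₀^∞ (1 − e^{−uz}) e^{−z/a} z^{−1} dz = log(1 + au). -/
open MeasureTheory Set Real

/-- interval integral of `exp (-(z*t))` in `t`. -/
lemma aux_interval_exp (z u : ℝ) (hz : z ≠ 0) :
    ∫ t in (0:ℝ)..u, Real.exp (-(z * t)) = (1 - Real.exp (-(z * u))) / z := by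
  have hderiv : ∀ t ∈ Set.uIcc (0:ℝ) u,
      HasDerivAt (fun t => -Real.exp (-(z * t)) / z) (Real.exp (-(z * t))) t := by
    intro t _
    have h1 : HasDerivAt (fun t : ℝ => -(z * t)) (-z) t := by
      simpa using ((hasDerivAt_id t).const_mul z).fun_neg
    have h2 := (h1.exp).fun_neg.div_const z
    rw [show -(Real.exp (-(z * t)) * -z) / z = Real.exp (-(z * t)) by
      rw [mul_neg, neg_neg, mul_div_assoc, div_self hz, mul_one]] at h2
    exact h2
  have hint : IntervalIntegrable (fun t => Real.exp (-(z * t))) MeasureTheory.volume 0 u :=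
    (Real.continuous_exp.comp (by continuity)).intervalIntegrable 0 u
  rw [intervalIntegral.integral_eq_sub_of_hasDerivAt hderiv hint]
  field_simp
  rw [mul_zero, neg_zero, Real.exp_zero]
  ring

/-- integral of `exp (-(b*z))` on `Ioi 0`. -/
lemma aux_Ioi_exp {b : ℝ} (hb : 0 < b) :
    ∫ z in Set.Ioi (0:ℝ), Real.exp (-(b * z)) = 1 / b := by
  have := integral_comp_mul_left_Ioi (fun x => Real.exp (-x)) 0 hb
  simp only [mul_zero, integral_exp_neg_Ioi, neg_zero, Real.exp_zero, smul_eq_mul,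
    mul_one] at this
  rw [this, one_div]

/-- **Frullani-type integral for the gamma subordinator's Laplace exponent.**
For a > 0 and u ≥ 0, z ↦ (1 − e^{−uz}) e^{−z/a} / z is integrable on (0,∞) and
∫₀^∞ (1 − e^{−uz}) e^{−z/a} z⁻¹ dz = log(1 + au). -/
theorem stmt_9 (a u : ℝ) (ha : 0 < a) (hu : 0 ≤ u) :
    IntegrableOn (fun z : ℝ => (1 - Real.exp (-u * z)) * Real.exp (-z / a) / z)
      (Set.Ioi 0) ∧
    ∫ z in Set.Ioi (0 : ℝ), (1 - Real.exp (-u * z)) * Real.exp (-z / a) / z =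
      Real.log (1 + a * u) := by
  set f : ℝ → ℝ := fun z => (1 - Real.exp (-u * z)) * Real.exp (-z / a) / z with hf
  -- pointwise bound : for z > 0, 0 ≤ f z ≤ u * exp (-(1/a) * z)
  have hbound : ∀ z ∈ Set.Ioi (0:ℝ), ‖f z‖ ≤ u * Real.exp (-(1/a) * z) := by
    intro z hz
    have hz0 : 0 < z := hz
    have h1 : 0 ≤ 1 - Real.exp (-u * z) := by
      have : Real.exp (-u * z) ≤ 1 := Real.exp_le_one_iff.mpr (by nlinarith)
      linarith
    have h2 : 1 - Real.exp (-u * z) ≤ u * z := by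
      have := Real.add_one_le_exp (-u * z)
      linarith
    have hfz : f z = (1 - Real.exp (-u * z)) / z * Real.exp (-z / a) := by
      simp [hf]; ring
    rw [hfz, Real.norm_eq_abs, abs_of_nonneg (by positivity)]
    have : (1 - Real.exp (-u * z)) / z ≤ u := by
      rw [div_le_iff₀ hz0]; linarith
    have hexp : Real.exp (-z / a) = Real.exp (-(1/a) * z) := by ring_nf
    rw [hexp]
    exact mul_le_mul_of_nonneg_right this (Real.exp_pos _).le
  have hmeas : AEStronglyMeasurable f (volume.restrict (Set.Ioi (0:ℝ))) := by
    apply Measurable.aestronglyMeasurable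
    fun_prop
  have hint : IntegrableOn f (Set.Ioi 0) := by
    have hg : IntegrableOn (fun z => u * Real.exp (-(1/a) * z)) (Set.Ioi (0:ℝ)) :=
      (exp_neg_integrableOn_Ioi 0 (by positivity)).const_mul u
    exact Integrable.mono' hg hmeas
      ((ae_restrict_iff' measurableSet_Ioi).mpr (Filter.Eventually.of_forall hbound))
  refine ⟨hint, ?_⟩
  -- rewrite f z as an interval integral in t
  have hrw : ∀ z ∈ Set.Ioi (0:ℝ),
      f z = ∫ t in Set.Ioc (0:ℝ) u, Real.exp (-((t + 1/a) * z)) := by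
    intro z hz
    have hz0 : 0 < z := hz
    rw [← intervalIntegral.integral_of_le hu]
    have : ∀ t : ℝ, Real.exp (-((t + 1/a) * z)) = Real.exp (-(z * t)) * Real.exp (-z/a) := by
      intro t
      rw [← Real.exp_add]; ring_nf
    simp_rw [this]
    rw [intervalIntegral.integral_mul_const, aux_interval_exp z u hz0.ne']
    simp [hf, mul_comm u z, div_mul_eq_mul_div]
  rw [setIntegral_congr_fun measurableSet_Ioi hrw]
  -- Fubini
  have hprod : Integrable (Function.uncurry fun z t => Real.exp (-((t + 1/a) * z)))
      ((volume.restrict (Set.Ioi (0:ℝ))).prod (volume.restrict (Set.Ioc (0:ℝ) u))) := by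
    have hmeas2 : AEStronglyMeasurable
        (Function.uncurry fun z t => Real.exp (-((t + 1/a) * z)))
        ((volume.restrict (Set.Ioi (0:ℝ))).prod (volume.restrict (Set.Ioc (0:ℝ) u))) := by
      apply Continuous.aestronglyMeasurable
      apply Real.continuous_exp.comp
      fun_prop
    have hB : Integrable (fun p : ℝ × ℝ => Real.exp (-(1/a) * p.1) * 1)
        ((volume.restrict (Set.Ioi (0:ℝ))).prod (volume.restrict (Set.Ioc (0:ℝ) u))) := by
      exact Integrable.mul_prod (exp_neg_integrableOn_Ioi 0 (by positivity))
        (integrable_const 1)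
    apply Integrable.mono' hB hmeas2
    rw [Measure.ae_prod_iff_ae_ae]
    · filter_upwards [ae_restrict_mem measurableSet_Ioi] with z hz
      filter_upwards [ae_restrict_mem measurableSet_Ioc] with t ht
      simp only [Function.uncurry, Real.norm_eq_abs, Real.abs_exp, mul_one]
      apply Real.exp_le_exp.mpr
      have : 0 < z := hz
      nlinarith [ht.1.le]
    · exact measurableSet_le (by fun_prop) (by fun_prop)
  rw [integral_integral_swap hprod]
  -- inner integral over z
  have hin : ∀ t ∈ Set.Ioc (0:ℝ) u,
      (∫ z in Set.Ioi (0:ℝ), Real.exp (-((t + 1/a) * z))) = (t + 1/a)⁻¹ := by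
    intro t ht
    have htpos : (0:ℝ) < t + 1/a := by
      have h1 := ht.1
      have h2 : (0:ℝ) < 1/a := by positivity
      linarith
    rw [aux_Ioi_exp htpos, one_div]
  rw [setIntegral_congr_fun measurableSet_Ioc hin]
  rw [← intervalIntegral.integral_of_le hu]
  rw [show (fun t : ℝ => (t + 1/a)⁻¹) = fun t : ℝ => (fun x : ℝ => x⁻¹) (t + 1/a) from rfl]
  rw [intervalIntegral.integral_comp_add_right (fun x : ℝ => x⁻¹) (1/a)]
  rw [integral_inv (by
    intro h
    rcases Set.mem_uIcc.mp h with ⟨h1, _⟩ | ⟨_, h2⟩ <;> nlinarith [one_div_pos.mpr ha])]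
  congr 1
  field_simp
  ring
end
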